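/- Let R be a ring in which 2 is a unit, M a free left R-module of rank 2, and p₀, p₁, p₂ three mutually distant points of P(M). Then there exists a unique point p₃ ∈ P(M) with (p₀,p₁,p₂,p₃) harmonic (uniqueness of the fourth harmonic point). -/

import Mathlib

/-- A point of the projective line over `M`: a cyclic submodule generated by an
admissible element, i.e. by the first vector of some two-element basis. -/
def IsPoint (R M : Type*) [Ring R] [AddCommGroup M] [Module R M]
    (p : Submodule R M) : Prop :=
  ∃ g : Module.Basis (Fin 2) R M, p = Submodule.span R {g 0}

/-- Harmonic quadruple of points of the projective line over `M`. -/
def Harm (R M : Type*) [Ring R] [AddCommGroup M] [Module R M]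
    (p₀ p₁ p₂ p₃ : Submodule R M) : Prop :=
  ∃ g : Module.Basis (Fin 2) R M,
    p₀ = Submodule.span R {g 0} ∧ p₁ = Submodule.span R {g 1} ∧
    p₂ = Submodule.span R {g 0 + g 1} ∧ p₃ = Submodule.span R {g 0 - g 1}

section Aux

variable {R M : Type*} [Ring R] [AddCommGroup M] [Module R M]

/-- An element of a basis admits no nonzero annihilators. -/
lemma HarmAux.reg_of_basis (g : Module.Basis (Fin 2) R M) (i : Fin 2) :
    ∀ r : R, r • g i = 0 → r = 0 := by
  intro r h
  have := congrArg (fun x => g.repr x i) h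
  simpa using this

/-- Equal cyclic spans of regular elements differ by a unit. -/
lemma HarmAux.unit_of_span_eq {x y : M} (hx : ∀ r : R, r • x = 0 → r = 0)
    (hy : ∀ r : R, r • y = 0 → r = 0)
    (h : Submodule.span R {x} = Submodule.span R {y}) :
    ∃ u : Rˣ, x = (u : R) • y := by
  have hxy : x ∈ Submodule.span R ({y} : Set M) := by
    rw [← h]; exact Submodule.mem_span_singleton_self x
  have hyx : y ∈ Submodule.span R ({x} : Set M) := by
    rw [h]; exact Submodule.mem_span_singleton_self y
  obtain ⟨a, ha⟩ := Submodule.mem_span_singleton.mp hxy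
  obtain ⟨b, hb⟩ := Submodule.mem_span_singleton.mp hyx
  have hab : (a * b) • x = x := by rw [mul_smul, hb, ha]
  have hba : (b * a) • y = y := by rw [mul_smul, ha, hb]
  have h1 : a * b = 1 := by
    have := hx (a * b - 1) (by rw [sub_smul, one_smul, hab, sub_self])
    linear_combination (norm := noncomm_ring) this
  have h2 : b * a = 1 := by
    have := hy (b * a - 1) (by rw [sub_smul, one_smul, hba, sub_self])
    linear_combination (norm := noncomm_ring) this
  exact ⟨⟨a, b, h1, h2⟩, ha.symm⟩

/-- Scaling by a unit does not change the cyclic span. -/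
lemma HarmAux.span_unit_smul (u : Rˣ) (x : M) :
    Submodule.span R {(u : R) • x} = Submodule.span R {x} := by
  apply le_antisymm
  · rw [Submodule.span_le, Set.singleton_subset_iff]
    exact Submodule.smul_mem _ _ (Submodule.mem_span_singleton_self x)
  · rw [Submodule.span_le, Set.singleton_subset_iff]
    refine Submodule.mem_span_singleton.mpr ⟨((u⁻¹ : Rˣ) : R), ?_⟩
    rw [smul_smul, Units.inv_mul, one_smul]

/-- Two regular elements whose cyclic spans are complementary form a basis. -/
lemma HarmAux.basis_of_compl {e b : M} (he : ∀ r : R, r • e = 0 → r = 0)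
    (hb : ∀ r : R, r • b = 0 → r = 0)
    (hc : IsCompl (Submodule.span R ({e} : Set M)) (Submodule.span R ({b} : Set M))) :
    ∃ f : Module.Basis (Fin 2) R M, f 0 = e ∧ f 1 = b := by
  have hli : LinearIndependent R ![e, b] := by
    rw [Fintype.linearIndependent_iff]
    intro c hc0
    have hsum : c 0 • e + c 1 • b = 0 := by
      simpa [Fin.sum_univ_two] using hc0
    have hmem1 : c 0 • e ∈ Submodule.span R ({e} : Set M) :=
      Submodule.smul_mem _ _ (Submodule.mem_span_singleton_self e)
    have hmem2 : c 0 • e ∈ Submodule.span R ({b} : Set M) := by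
      rw [eq_neg_of_add_eq_zero_left hsum]
      exact Submodule.neg_mem _ (Submodule.smul_mem _ _ (Submodule.mem_span_singleton_self b))
    have h0 : c 0 • e = 0 := Submodule.disjoint_def.mp hc.disjoint _ hmem1 hmem2
    have hc0' : c 0 = 0 := he _ h0
    have h1 : c 1 • b = 0 := by rwa [h0, zero_add] at hsum
    have hc1' : c 1 = 0 := hb _ h1
    intro i; fin_cases i <;> assumption
  have hsp : ⊤ ≤ Submodule.span R (Set.range ![e, b]) := by
    have hr : Set.range ![e, b] = {e, b} := by
      ext x; simp [Fin.exists_fin_two]; tauto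
    rw [hr, Set.insert_eq, Submodule.span_union]
    rw [codisjoint_iff.mp hc.codisjoint]
  refine ⟨Module.Basis.mk hli hsp, ?_, ?_⟩ <;> simp

/-- Coordinates with respect to a two-element basis are unique. -/
lemma HarmAux.coords_unique (f : Module.Basis (Fin 2) R M) {a₀ a₁ b₀ b₁ : R}
    (h : a₀ • f 0 + a₁ • f 1 = b₀ • f 0 + b₁ • f 1) : a₀ = b₀ ∧ a₁ = b₁ := by
  have h0 := congrArg (fun x => f.repr x 0) h
  have h1 := congrArg (fun x => f.repr x 1) h
  simp [Finsupp.single_apply] at h0 h1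
  exact ⟨h0, h1⟩

/-- Expansion of a vector in a two-element basis. -/
lemma HarmAux.repr_expand (f : Module.Basis (Fin 2) R M) (x : M) :
    x = f.repr x 0 • f 0 + f.repr x 1 • f 1 := by
  have := f.sum_repr x
  rw [Fin.sum_univ_two] at this
  exact this.symm

/-- The sum of the two elements of a basis is regular. -/
lemma HarmAux.reg_sum_basis (g : Module.Basis (Fin 2) R M) :
    ∀ r : R, r • (g 0 + g 1) = 0 → r = 0 := by
  intro r h
  rw [smul_add] at h
  have h' : r • g 0 + r • g 1 = (0 : R) • g 0 + (0 : R) • g 1 := by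
    rw [zero_smul, zero_smul, add_zero, h]
  exact (HarmAux.coords_unique g h').1

/-- Key uniqueness lemma: if two bases induce the same first three points of a
harmonic quadruple, they induce the same fourth point. -/
lemma HarmAux.harm_span_unique (g h : Module.Basis (Fin 2) R M)
    (e0 : Submodule.span R ({h 0} : Set M) = Submodule.span R ({g 0} : Set M))
    (e1 : Submodule.span R ({h 1} : Set M) = Submodule.span R ({g 1} : Set M))
    (e2 : Submodule.span R ({h 0 + h 1} : Set M) =
      Submodule.span R ({g 0 + g 1} : Set M)) :
    Submodule.span R ({h 0 - h 1} : Set M) = Submodule.span R ({g 0 - g 1} : Set M) := by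
  obtain ⟨u, hu⟩ :=
    HarmAux.unit_of_span_eq (HarmAux.reg_of_basis h 0) (HarmAux.reg_of_basis g 0) e0
  obtain ⟨v, hv⟩ :=
    HarmAux.unit_of_span_eq (HarmAux.reg_of_basis h 1) (HarmAux.reg_of_basis g 1) e1
  obtain ⟨w, hw⟩ :=
    HarmAux.unit_of_span_eq (HarmAux.reg_sum_basis h) (HarmAux.reg_sum_basis g) e2
  have hkey : (u : R) • g 0 + (v : R) • g 1 = (w : R) • g 0 + (w : R) • g 1 := by
    rw [← hu, ← hv, ← smul_add, ← hw]
  obtain ⟨huw, hvw⟩ := HarmAux.coords_unique g hkey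
  have hrw : h 0 - h 1 = (u : R) • (g 0 - g 1) := by
    rw [smul_sub, hu, hv, huw, hvw]
  rw [hrw]
  exact HarmAux.span_unit_smul u _

end Aux

/-- Uniqueness of the fourth harmonic point: if `2 ∈ R*` and `p₀,p₁,p₂` are three
mutually distant points of the projective line over `M`, then there is a unique
point `p₃` with `(p₀,p₁,p₂,p₃)` harmonic. -/
theorem fourth_harmonic_point_unique (R M : Type*) [Ring R] [AddCommGroup M] [Module R M]
    (h2 : IsUnit (2 : R)) (p₀ p₁ p₂ : Submodule R M)
    (hp₀ : IsPoint R M p₀) (hp₁ : IsPoint R M p₁) (hp₂ : IsPoint R M p₂)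
    (h01 : IsCompl p₀ p₁) (h02 : IsCompl p₀ p₂) (h12 : IsCompl p₁ p₂) :
    ∃! p₃ : Submodule R M, Harm R M p₀ p₁ p₂ p₃ := by
  classical
  obtain ⟨g0, hg0⟩ := hp₀
  obtain ⟨g1, hg1⟩ := hp₁
  obtain ⟨g2, hg2⟩ := hp₂
  set e : M := g0 0 with he_def
  set b : M := g1 0 with hb_def
  set c : M := g2 0 with hc_def
  have he : ∀ r : R, r • e = 0 → r = 0 := HarmAux.reg_of_basis g0 0
  have hb : ∀ r : R, r • b = 0 → r = 0 := HarmAux.reg_of_basis g1 0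
  have hc : ∀ r : R, r • c = 0 → r = 0 := HarmAux.reg_of_basis g2 0
  rw [hg0, hg1] at h01
  rw [hg0, hg2] at h02
  rw [hg1, hg2] at h12
  obtain ⟨f, hf0, hf1⟩ := HarmAux.basis_of_compl he hb h01
  obtain ⟨f2, hf20, hf21⟩ := HarmAux.basis_of_compl he hc h02
  obtain ⟨f3, hf30, hf31⟩ := HarmAux.basis_of_compl hb hc h12
  -- expand c in the basis (e, b)
  set A : R := f.repr c 0 with hA_def
  set B : R := f.repr c 1 with hB_def
  have hcAB : c = A • e + B • b := by
    have := HarmAux.repr_expand f c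
    rwa [hf0, hf1] at this
  -- expand b in the basis (e, c)
  set r : R := f2.repr b 0 with hr_def
  set s : R := f2.repr b 1 with hs_def
  have hbrs : b = r • e + s • c := by
    have := HarmAux.repr_expand f2 b
    rwa [hf20, hf21] at this
  -- expand e in the basis (b, c)
  set r' : R := f3.repr e 0 with hr'_def
  set s' : R := f3.repr e 1 with hs'_def
  have hers : e = r' • b + s' • c := by
    have := HarmAux.repr_expand f3 e
    rwa [hf30, hf31] at this
  -- B is a unit
  have hsB : s * B = 1 := by
    have h1 : b = (r + s * A) • e + (s * B) • b := by
      conv_lhs => rw [hbrs, hcAB]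
      rw [smul_add, smul_smul, smul_smul, add_smul, ← add_assoc]
    have h2 : (0 : R) • e + (1 : R) • b = (r + s * A) • e + (s * B) • b := by
      rw [zero_smul, one_smul, zero_add]; exact h1
    rw [← hf0, ← hf1] at h2
    exact ((HarmAux.coords_unique f h2).2).symm
  have hBs : B * s = 1 := by
    have h1 : c = (A + B * r) • e + (B * s) • c := by
      conv_lhs => rw [hcAB, hbrs]
      rw [smul_add, smul_smul, smul_smul, add_smul]
      abel
    have h2 : (0 : R) • e + (1 : R) • c = (A + B * r) • e + (B * s) • c := by
      rw [zero_smul, one_smul, zero_add]; exact h1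
    rw [← hf20, ← hf21] at h2
    exact ((HarmAux.coords_unique f2 h2).2).symm
  -- A is a unit
  have hs'A : s' * A = 1 := by
    have h1 : e = (s' * A) • e + (r' + s' * B) • b := by
      conv_lhs => rw [hers, hcAB]
      rw [smul_add, smul_smul, smul_smul, add_smul]
      abel
    have h2 : (1 : R) • e + (0 : R) • b = (s' * A) • e + (r' + s' * B) • b := by
      rw [zero_smul, one_smul, add_zero]; exact h1
    rw [← hf0, ← hf1] at h2
    exact ((HarmAux.coords_unique f h2).1).symm
  have hAs' : A * s' = 1 := by
    have h1 : c = (A * r' + B) • b + (A * s') • c := by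
      conv_lhs => rw [hcAB, hers]
      rw [smul_add, smul_smul, smul_smul, add_smul]
      abel
    have h2 : (0 : R) • b + (1 : R) • c = (A * r' + B) • b + (A * s') • c := by
      rw [zero_smul, one_smul, zero_add]; exact h1
    rw [← hf30, ← hf31] at h2
    exact ((HarmAux.coords_unique f3 h2).2).symm
  -- the units
  set uA : Rˣ := ⟨A, s', hAs', hs'A⟩ with huA_def
  set uB : Rˣ := ⟨B, s, hBs, hsB⟩ with huB_def
  set e' : M := A • e with he'_def
  set b' : M := B • b with hb'_def
  have he' : ∀ t : R, t • e' = 0 → t = 0 := by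
    intro t ht
    have : (t * A) • e = 0 := by rwa [mul_smul]
    have htA : t * A = 0 := he _ this
    have := congrArg (fun x => x * s') htA
    simpa [mul_assoc, hAs'] using this
  have hb' : ∀ t : R, t • b' = 0 → t = 0 := by
    intro t ht
    have : (t * B) • b = 0 := by rwa [mul_smul]
    have htB : t * B = 0 := hb _ this
    have := congrArg (fun x => x * s) htB
    simpa [mul_assoc, hBs] using this
  have hspane : Submodule.span R ({e'} : Set M) = Submodule.span R ({e} : Set M) :=
    HarmAux.span_unit_smul uA e
  have hspanb : Submodule.span R ({b'} : Set M) = Submodule.span R ({b} : Set M) :=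
    HarmAux.span_unit_smul uB b
  have h01' : IsCompl (Submodule.span R ({e'} : Set M)) (Submodule.span R ({b'} : Set M)) := by
    rw [hspane, hspanb]; exact h01
  obtain ⟨f', hf'0, hf'1⟩ := HarmAux.basis_of_compl he' hb' h01'
  have hc' : c = e' + b' := hcAB
  have hHarm : Harm R M p₀ p₁ p₂ (Submodule.span R ({f' 0 - f' 1} : Set M)) := by
    refine ⟨f', ?_, ?_, ?_, rfl⟩
    · rw [hf'0, hspane, hg0]
    · rw [hf'1, hspanb, hg1]
    · rw [hf'0, hf'1, ← hc', hg2]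
  refine ⟨Submodule.span R ({f' 0 - f' 1} : Set M), hHarm, ?_⟩
  intro q hq
  obtain ⟨k, hk0, hk1, hk2, hk3⟩ := hq
  obtain ⟨f'', hf''0, hf''1, hf''2, hf''3⟩ := hHarm
  rw [hk3, hf''3]
  refine HarmAux.harm_span_unique f'' k ?_ ?_ ?_
  · rw [← hk0, ← hf''0]
  · rw [← hk1, ← hf''1]
  · rw [← hk2, ← hf''2]
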